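/- arXiv:1808.00372 — 2 statements merged into one kernel-verified Lean document; each statement's English description precedes it below -/
import Mathlib

section
/- Let G be a simple connected graph with n nodes and m edges, S_q(G) its q-subdivision graph with old node set V and new node set V′. Then ∑_{i∈V′} ∑_{j∈V} r̂_{ij} = K̄(G) + (mnq - n² + n)/2, where K̄(G) = ∑_{{i,j}⊆V} (d_i + d_j) r_{ij} is the additive degree-Kirchhoff index of G and r̂ denotes effective resistance in S_q(G). -/
open Finset

variable {V : Type*}

/-- Normalized adjacency matrix `P = D^{-1/2} A D^{-1/2}`. -/
noncomputable def normAdj [Fintype V] (G : SimpleGraph V) [DecidableRel G.Adj] :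
    Matrix V V ℝ :=
  Matrix.of fun i j =>
    if G.Adj i j then 1 / Real.sqrt ((G.degree i : ℝ) * (G.degree j : ℝ)) else 0

lemma normAdj_isHermitian [Fintype V] (G : SimpleGraph V) [DecidableRel G.Adj] :
    (normAdj G).IsHermitian := by
  ext i j
  simp only [Matrix.conjTranspose_apply, normAdj, Matrix.of_apply, star_trivial]
  by_cases h : G.Adj i j
  · rw [if_pos h, if_pos ((G.adj_comm i j).mp h), mul_comm]
  · rw [if_neg h, if_neg (fun h' => h ((G.adj_comm j i).mp h'))]

/-- `μ` is an eigenvalue of `M`. -/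
def IsEigenvalue {W : Type*} [Fintype W] (M : Matrix W W ℝ) (μ : ℝ) : Prop :=
  ∃ v : W → ℝ, v ≠ 0 ∧ M.mulVec v = μ • v

/-- Multiplicity of `μ` as an eigenvalue of `M` (dimension of the eigenspace). -/
noncomputable def eigMult {W : Type*} [Fintype W] [DecidableEq W]
    (M : Matrix W W ℝ) (μ : ℝ) : ℕ :=
  Module.finrank ℝ (LinearMap.ker (Matrix.toLin' (M - μ • (1 : Matrix W W ℝ))))

/-- `r` is the effective-resistance function of `G`: `r i j = φ i - φ j` where
`L φ = e_i - e_j`. -/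
def IsEffRes [Fintype V] [DecidableEq V] (G : SimpleGraph V) [DecidableRel G.Adj]
    (r : V → V → ℝ) : Prop :=
  ∀ i j : V, ∃ φ : V → ℝ,
    (G.lapMatrix ℝ).mulVec φ =
      (fun k => (if k = i then (1 : ℝ) else 0) - (if k = j then (1 : ℝ) else 0)) ∧
    r i j = φ i - φ j

/-- `T` is the expected-hitting-time function of the simple random walk on `G`. -/
def IsHitting [Fintype V] (G : SimpleGraph V) [DecidableRel G.Adj] (T : V → V → ℝ) : Prop :=
  (∀ j, T j j = 0) ∧
  ∀ i j : V, i ≠ j → T i j = 1 + (∑ k ∈ G.neighborFinset i, T k j) / (G.degree i : ℝ)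

/-- Kemeny constant `∑_{λ eigenvalue ≠ 1} 1/(1-λ)` of the random walk on `G`. -/
noncomputable def kemeny [Fintype V] [DecidableEq V] (G : SimpleGraph V) [DecidableRel G.Adj]
    (hP : (normAdj G).IsHermitian) : ℝ :=
  ∑ i, if hP.eigenvalues i = 1 then 0 else 1 / (1 - hP.eigenvalues i)

/-- Kirchhoff index. -/
noncomputable def kirchhoff [Fintype V] (r : V → V → ℝ) : ℝ :=
  (∑ i, ∑ j, r i j) / 2

/-- Additive degree-Kirchhoff index. -/
noncomputable def addKirchhoff [Fintype V] (G : SimpleGraph V) [DecidableRel G.Adj]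
    (r : V → V → ℝ) : ℝ :=
  (∑ i, ∑ j, ((G.degree i : ℝ) + (G.degree j : ℝ)) * r i j) / 2

/-- Multiplicative degree-Kirchhoff index. -/
noncomputable def mulKirchhoff [Fintype V] (G : SimpleGraph V) [DecidableRel G.Adj]
    (r : V → V → ℝ) : ℝ :=
  (∑ i, ∑ j, (G.degree i : ℝ) * (G.degree j : ℝ) * r i j) / 2

/-- The adjacency relation of the q-subdivision graph. -/
def qSubAdj (G : SimpleGraph V) (q : ℕ) :
    (V ⊕ (G.edgeSet × Fin q)) → (V ⊕ (G.edgeSet × Fin q)) → Prop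
  | Sum.inl u, Sum.inr p => u ∈ (p.1 : Sym2 V)
  | Sum.inr p, Sum.inl u => u ∈ (p.1 : Sym2 V)
  | _, _ => False

/-- The q-subdivision graph `S_q(G)`: every edge `uv` of `G` is replaced by `q`
disjoint paths of length 2. -/
def qSubdivision (G : SimpleGraph V) (q : ℕ) :
    SimpleGraph (V ⊕ (G.edgeSet × Fin q)) where
  Adj := qSubAdj G q
  symm := by
    constructor
    intro a b h
    cases a <;> cases b <;> simp_all [qSubAdj]
  loopless := by
    constructor
    intro a h
    cases a <;> simp_all [qSubAdj]

noncomputable instance (G : SimpleGraph V) (q : ℕ) :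
    DecidableRel (qSubdivision G q).Adj := Classical.decRel _

noncomputable instance [Fintype V] (G : SimpleGraph V) : Fintype G.edgeSet :=
  Fintype.ofFinite _


namespace Stmt14Aux
open Matrix

section Green
variable {W : Type*} [Fintype W] [DecidableEq W]

lemma green_exists (Gw : SimpleGraph W) [DecidableRel Gw.Adj] (hc : Gw.Connected) :
    ∃ H : Matrix W W ℝ, H.IsSymm ∧
      Gw.lapMatrix ℝ * H =
        1 - (Fintype.card W : ℝ)⁻¹ • Matrix.of (fun _ _ => (1 : ℝ)) := by
  haveI : Nonempty W := hc.nonempty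
  have hn0 : (0 : ℝ) < (Fintype.card W : ℝ) := by
    exact_mod_cast Fintype.card_pos
  set J : Matrix W W ℝ := Matrix.of (fun _ _ => (1 : ℝ)) with hJ
  set L : Matrix W W ℝ := Gw.lapMatrix ℝ with hL
  set M : Matrix W W ℝ := L + (Fintype.card W : ℝ)⁻¹ • J with hM
  -- M is injective on vectors
  have hinj : ∀ x : W → ℝ, M *ᵥ x = 0 → x = 0 := by
    intro x hx
    have hquad : x ⬝ᵥ (M *ᵥ x) = 0 := by rw [hx, dotProduct_zero]
    have hJx : x ⬝ᵥ (J *ᵥ x) = (∑ i, x i) ^ 2 := by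
      simp only [dotProduct, mulVec, hJ, Matrix.of_apply, one_mul, sq,
        Finset.mul_sum, Finset.sum_mul]
      exact Finset.sum_congr rfl fun i _ => Finset.sum_congr rfl fun j _ => mul_comm _ _
    have hsplit : x ⬝ᵥ (M *ᵥ x)
        = x ⬝ᵥ (L *ᵥ x) + (Fintype.card W : ℝ)⁻¹ * (∑ i, x i) ^ 2 := by
      rw [hM, add_mulVec, dotProduct_add, smul_mulVec, dotProduct_smul,
        smul_eq_mul, hJx]
    have hL0 : 0 ≤ x ⬝ᵥ (L *ᵥ x) := by
      have := (Gw.posSemidef_lapMatrix ℝ).dotProduct_mulVec_nonneg x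
      simpa using this
    have hsum0 : 0 ≤ (Fintype.card W : ℝ)⁻¹ * (∑ i, x i) ^ 2 := by positivity
    have h1 : x ⬝ᵥ (L *ᵥ x) = 0 := by linarith [hquad ▸ hsplit]
    have h2 : (Fintype.card W : ℝ)⁻¹ * (∑ i, x i) ^ 2 = 0 := by
      linarith [hquad ▸ hsplit]
    have hconst : ∀ i j : W, x i = x j := by
      have := (Gw.lapMatrix_toLinearMap₂'_apply'_eq_zero_iff_forall_reachable x).mp
        (by rw [Matrix.toLinearMap₂'_apply']; exact h1)
      exact fun i j => this i j (hc.preconnected i j)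
    have hsum : (∑ i, x i) = 0 := by
      have hne : ((Fintype.card W : ℝ))⁻¹ ≠ 0 := ne_of_gt (inv_pos.mpr hn0)
      have := (mul_eq_zero.mp h2).resolve_left hne
      exact pow_eq_zero_iff two_ne_zero |>.mp this
    funext i
    have : (∑ j, x j) = (Fintype.card W : ℝ) * x i := by
      rw [Finset.sum_congr rfl (fun j _ => hconst j i)]
      simp [Finset.sum_const, nsmul_eq_mul]
    rw [this] at hsum
    rcases mul_eq_zero.mp hsum with h | h
    · exact absurd h (ne_of_gt hn0)
    · simpa using h
  -- M is invertible
  have hdet : M.det ≠ 0 := by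
    intro h
    obtain ⟨v, hv0, hv⟩ := (Matrix.exists_mulVec_eq_zero_iff).mpr h
    exact hv0 (hinj v hv)
  have hMunit : IsUnit M.det := isUnit_iff_ne_zero.mpr hdet
  refine ⟨M⁻¹, ?_, ?_⟩
  · -- symmetry
    have hMsymm : Mᵀ = M := by
      have h2 : Jᵀ = J := by ext i j; simp [hJ]
      rw [hM, Matrix.transpose_add, Matrix.transpose_smul,
        show Lᵀ = L from Gw.isSymm_lapMatrix (R := ℝ), h2]
    show M⁻¹ᵀ = M⁻¹
    rw [Matrix.transpose_nonsing_inv, hMsymm]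
  · -- the key identity
    have hMH : M * M⁻¹ = 1 := Matrix.mul_nonsing_inv M hMunit
    have hJL : J * L = 0 := by
      ext i j
      simp only [Matrix.mul_apply, hJ, Matrix.of_apply, one_mul, Matrix.zero_apply]
      have hrow : ∑ k, L j k = 0 := by
        have := congrFun (Gw.lapMatrix_mulVec_const_eq_zero (R := ℝ)) j
        simpa [mulVec, dotProduct] using this
      rw [← hrow]
      exact Finset.sum_congr rfl fun k _ =>
        congrFun (congrFun (Gw.isSymm_lapMatrix (R := ℝ)) j) k
    have hJJ : J * J = (Fintype.card W : ℝ) • J := by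
      ext i j
      simp [hJ, Matrix.mul_apply, Matrix.smul_apply]
    have hJM : J * M = J := by
      rw [hM, Matrix.mul_add, hJL, zero_add, Matrix.mul_smul, hJJ, smul_smul,
        inv_mul_cancel₀ (ne_of_gt hn0), one_smul]
    have hJH : J * M⁻¹ = J := by
      conv_lhs => rw [← hJM]
      rw [Matrix.mul_assoc, hMH, Matrix.mul_one]
    have hLM : L = M - (Fintype.card W : ℝ)⁻¹ • J := by
      rw [hM]; ring_nf; abel
    rw [hLM, Matrix.sub_mul, hMH, Matrix.smul_mul, hJH]

lemma effRes_unique (Gw : SimpleGraph W) [DecidableRel Gw.Adj] (hc : Gw.Connected)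
    {r : W → W → ℝ} (hr : IsEffRes Gw r) (i j : W) (ψ : W → ℝ)
    (hψ : (Gw.lapMatrix ℝ) *ᵥ ψ =
      (fun k => (if k = i then (1 : ℝ) else 0) - (if k = j then (1 : ℝ) else 0))) :
    r i j = ψ i - ψ j := by
  obtain ⟨φ, hφ, hrij⟩ := hr i j
  have hker : Gw.lapMatrix ℝ *ᵥ (φ - ψ) = 0 := by
    rw [Matrix.mulVec_sub, hφ, hψ, sub_self]
  have hconst : (φ - ψ) i = (φ - ψ) j := by
    have := Gw.lapMatrix_mulVec_eq_zero_iff_forall_reachable.mp hker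
    exact this i j (hc.preconnected i j)
  simp only [Pi.sub_apply] at hconst
  rw [hrij]; linarith

lemma effRes_green (Gw : SimpleGraph W) [DecidableRel Gw.Adj] (hc : Gw.Connected)
    {r : W → W → ℝ} (hr : IsEffRes Gw r) {H : Matrix W W ℝ}
    (hH : Gw.lapMatrix ℝ * H =
      1 - (Fintype.card W : ℝ)⁻¹ • Matrix.of (fun _ _ => (1 : ℝ))) (i j : W) :
    r i j = H i i + H j j - H i j - H j i := by
  have key : r i j = (H i i - H i j) - (H j i - H j j) := by
    apply effRes_unique Gw hc hr i j (fun k => H k i - H k j)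
    funext k
    have h1 : (Gw.lapMatrix ℝ *ᵥ fun k => H k i - H k j) k
        = (Gw.lapMatrix ℝ * H) k i - (Gw.lapMatrix ℝ * H) k j := by
      simp only [Matrix.mulVec, Matrix.mul_apply, dotProduct, mul_sub,
        Finset.sum_sub_distrib]
    rw [h1, hH]
    simp only [Matrix.sub_apply, Matrix.one_apply, Matrix.smul_apply, Matrix.of_apply,
      smul_eq_mul, mul_one]
    ring
  rw [key]; ring

end Green

section Sub
variable [Fintype V] [DecidableEq V] (G : SimpleGraph V) [DecidableRel G.Adj] (q : ℕ)

lemma adj_inl_inr {u : V} {p : G.edgeSet × Fin q} :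
    (qSubdivision G q).Adj (Sum.inl u) (Sum.inr p) ↔ u ∈ (p.1 : Sym2 V) := Iff.rfl

lemma adj_inr_inl {u : V} {p : G.edgeSet × Fin q} :
    (qSubdivision G q).Adj (Sum.inr p) (Sum.inl u) ↔ u ∈ (p.1 : Sym2 V) := Iff.rfl

lemma adj_inl_inl {u v : V} :
    ¬ (qSubdivision G q).Adj (Sum.inl u) (Sum.inl v) := fun h => h

lemma adj_inr_inr {p p' : G.edgeSet × Fin q} :
    ¬ (qSubdivision G q).Adj (Sum.inr p) (Sum.inr p') := fun h => h

lemma sum_ite_pair {a b : V} (hab : a ≠ b) (y : V → ℝ) :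
    ∑ u : V, (if u ∈ (s(a, b) : Sym2 V) then y u else 0) = y a + y b := by
  have hsplit : ∀ u : V, (if u ∈ (s(a, b) : Sym2 V) then y u else 0)
      = (if u = a then y u else 0) + (if u = b then y u else 0) := by
    intro u
    by_cases h1 : u = a <;> by_cases h2 : u = b <;>
      simp [Sym2.mem_iff, h1, h2, hab] <;> tauto
  simp only [hsplit, Finset.sum_add_distrib]
  rw [Finset.sum_ite_eq' Finset.univ a y, Finset.sum_ite_eq' Finset.univ b y]
  simp

lemma sum_incident (w : V) (g : Sym2 V → ℝ) :
    ∑ e : G.edgeSet, (if w ∈ (e : Sym2 V) then g e else 0)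
      = ∑ v ∈ G.neighborFinset w, g s(w, v) := by
  rw [← Finset.sum_filter]
  refine Finset.sum_bij'
    (i := fun (e : G.edgeSet) (he : e ∈ Finset.univ.filter (fun e : G.edgeSet => w ∈ (e : Sym2 V)))
      => Sym2.Mem.other' (Finset.mem_filter.mp he).2)
    (j := fun (v : V) (hv : v ∈ G.neighborFinset w) =>
      (⟨s(w, v), G.mem_edgeSet.mpr ((G.mem_neighborFinset w v).mp hv)⟩ : G.edgeSet))
    ?_ ?_ ?_ ?_ ?_
  · intro e he
    have h2 := (Finset.mem_filter.mp he).2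
    rw [G.mem_neighborFinset, ← G.mem_edgeSet, Sym2.other_spec' h2]
    exact e.2
  · intro v hv
    simp only [Finset.mem_filter, Finset.mem_univ, true_and]
    exact Sym2.mem_mk_left w v
  · intro e he
    have h2 := (Finset.mem_filter.mp he).2
    apply Subtype.ext
    exact Sym2.other_spec' h2
  · intro v hv
    have h : w ∈ (s(w, v) : Sym2 V) := Sym2.mem_mk_left w v
    exact Sym2.congr_right.mp (Sym2.other_spec' h)
  · intro e he
    have h2 := (Finset.mem_filter.mp he).2
    rw [Sym2.other_spec' h2]

lemma nbr_inl (x : (V ⊕ (G.edgeSet × Fin q)) → ℝ) (w : V) :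
    ∑ u ∈ (qSubdivision G q).neighborFinset (Sum.inl w), x u
      = ∑ p : G.edgeSet × Fin q, if w ∈ (p.1 : Sym2 V) then x (Sum.inr p) else 0 := by
  rw [SimpleGraph.neighborFinset_eq_filter, Finset.sum_filter, Fintype.sum_sum_type]
  simp [adj_inl_inl, adj_inl_inr]

lemma nbr_inr (e : G.edgeSet) (k : Fin q) (x : (V ⊕ (G.edgeSet × Fin q)) → ℝ) :
    ∑ u ∈ (qSubdivision G q).neighborFinset (Sum.inr (e, k)), x u
      = ∑ w : V, if w ∈ (e : Sym2 V) then x (Sum.inl w) else 0 := by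
  rw [SimpleGraph.neighborFinset_eq_filter, Finset.sum_filter, Fintype.sum_sum_type]
  simp [adj_inr_inr, adj_inr_inl]

lemma deg_inl (w : V) :
    (((qSubdivision G q).degree (Sum.inl w) : ℝ)) = (q : ℝ) * (G.degree w : ℝ) := by
  rw [SimpleGraph.degree_eq_sum_if_adj, Fintype.sum_sum_type]
  simp only [adj_inl_inl, if_false, Finset.sum_const_zero, zero_add]
  have h1 : ∀ p : G.edgeSet × Fin q,
      (if (qSubdivision G q).Adj (Sum.inl w) (Sum.inr p) then (1:ℝ) else 0)
        = (if w ∈ (p.1 : Sym2 V) then (1:ℝ) else 0) := by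
    intro p; simp [adj_inl_inr]
  simp only [h1]
  rw [Fintype.sum_prod_type_right]
  have h2 : (∑ e : G.edgeSet, if w ∈ (e : Sym2 V) then (1:ℝ) else 0) = (G.degree w : ℝ) := by
    rw [sum_incident G w (fun _ => (1:ℝ)), Finset.sum_const, nsmul_eq_mul, mul_one,
      SimpleGraph.card_neighborFinset_eq_degree]
  rw [Finset.sum_congr rfl (fun x _ => h2)]
  simp [mul_comm]

lemma deg_inr (e : G.edgeSet) (k : Fin q) :
    (((qSubdivision G q).degree (Sum.inr (e, k)) : ℝ)) = 2 := by
  rw [SimpleGraph.degree_eq_sum_if_adj, Fintype.sum_sum_type]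
  simp only [adj_inr_inr, if_false, Finset.sum_const_zero, add_zero]
  have h1 : ∀ w : V,
      (if (qSubdivision G q).Adj (Sum.inr (e, k)) (Sum.inl w) then (1:ℝ) else 0)
        = (if w ∈ (e : Sym2 V) then (1:ℝ) else 0) := by
    intro w; simp [adj_inr_inl]
  simp only [h1]
  obtain ⟨ee, he⟩ := e
  induction ee using Sym2.ind with
  | _ a b =>
    have hab : a ≠ b := G.ne_of_adj (G.mem_edgeSet.mp he)
    have hco : (↑(⟨s(a,b), he⟩ : G.edgeSet) : Sym2 V) = s(a, b) := rfl
    simp only [hco]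
    rw [sum_ite_pair hab (fun _ => (1:ℝ))]
    norm_num

lemma qSub_connected (hc : G.Connected) (hq : 0 < q) : (qSubdivision G q).Connected := by
  have hstep : ∀ u v : V, G.Adj u v →
      (qSubdivision G q).Reachable (Sum.inl u) (Sum.inl v) := by
    intro u v h
    have he : s(u, v) ∈ G.edgeSet := G.mem_edgeSet.mpr h
    have h1 : (qSubdivision G q).Adj (Sum.inl u) (Sum.inr (⟨s(u,v), he⟩, ⟨0, hq⟩)) :=
      Sym2.mem_mk_left u v
    have h2 : (qSubdivision G q).Adj (Sum.inr (⟨s(u,v), he⟩, ⟨0, hq⟩)) (Sum.inl v) :=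
      Sym2.mem_mk_right u v
    exact h1.reachable.trans h2.reachable
  have hinl : ∀ u v : V, (qSubdivision G q).Reachable (Sum.inl u) (Sum.inl v) := by
    intro u v
    obtain ⟨w⟩ := hc.preconnected u v
    induction w with
    | nil => exact SimpleGraph.Reachable.refl _
    | cons h p ih => exact (hstep _ _ h).trans ih
  have hany : ∀ x : V ⊕ (G.edgeSet × Fin q), ∃ u : V,
      (qSubdivision G q).Reachable x (Sum.inl u) := by
    intro x
    cases x with
    | inl u => exact ⟨u, SimpleGraph.Reachable.refl _⟩
    | inr p =>
      refine ⟨(p.1 : Sym2 V).out.1, ?_⟩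
      have : (qSubdivision G q).Adj (Sum.inr p) (Sum.inl (p.1 : Sym2 V).out.1) :=
        Sym2.out_fst_mem _
      exact this.reachable
  rw [SimpleGraph.connected_iff]
  refine ⟨?_, ⟨Sum.inl hc.nonempty.some⟩⟩
  intro x y
  obtain ⟨u, hx⟩ := hany x
  obtain ⟨v, hy⟩ := hany y
  exact hx.trans ((hinl u v).trans hy.symm)

lemma sum_ite_mem_edge (e : G.edgeSet) (y : V → ℝ) :
    ∑ u : V, (if u ∈ (e : Sym2 V) then y u else 0)
      = Sym2.lift ⟨fun x z => y x + y z, by intros; ring⟩ (e : Sym2 V) := by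
  obtain ⟨ee, he⟩ := e
  induction ee using Sym2.ind with
  | _ x z =>
    have hxz : x ≠ z := G.ne_of_adj (G.mem_edgeSet.mp he)
    have hco : (↑(⟨s(x, z), he⟩ : G.edgeSet) : Sym2 V) = s(x, z) := rfl
    simp only [hco]
    rw [sum_ite_pair hxz y, Sym2.lift_mk]

lemma r'_inl_inl (hc : G.Connected) (hq : 0 < q) {r : V → V → ℝ} (hr : IsEffRes G r)
    {r' : (V ⊕ (G.edgeSet × Fin q)) → (V ⊕ (G.edgeSet × Fin q)) → ℝ}
    (hr' : IsEffRes (qSubdivision G q) r') (a b : V) :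
    r' (Sum.inl a) (Sum.inl b) = (2 / q) * r a b := by
  have hq0 : (q : ℝ) ≠ 0 := Nat.cast_ne_zero.mpr hq.ne'
  obtain ⟨φ, hφ, hra⟩ := hr a b
  set g : Sym2 V → ℝ := Sym2.lift ⟨fun x y => φ x + φ y, fun x y => by ring⟩ with hg
  set ψ : (V ⊕ (G.edgeSet × Fin q)) → ℝ :=
    Sum.elim (fun w => (2 / q) * φ w) (fun p => (1 / q) * g p.1) with hψ
  have key : (qSubdivision G q).lapMatrix ℝ *ᵥ ψ = fun k =>
      (if k = Sum.inl a then (1:ℝ) else 0) - (if k = Sum.inl b then (1:ℝ) else 0) := by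
    funext k
    rw [SimpleGraph.lapMatrix_mulVec_apply]
    cases k with
    | inl w =>
      rw [deg_inl, nbr_inl]
      have h1 : ∀ p : G.edgeSet × Fin q,
          (if w ∈ (p.1 : Sym2 V) then ψ (Sum.inr p) else 0)
            = if w ∈ (p.1 : Sym2 V) then (1/(q:ℝ)) * g p.1 else 0 := fun p => rfl
      simp only [h1]
      rw [Fintype.sum_prod_type_right]
      have h2 : (∑ e : G.edgeSet, if w ∈ (e : Sym2 V) then (1/(q:ℝ)) * g e else 0)
          = ∑ v ∈ G.neighborFinset w, (1/(q:ℝ)) * g s(w, v) :=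
        sum_incident G w (fun s => (1/(q:ℝ)) * g s)
      rw [Finset.sum_congr rfl (fun x _ => h2), Finset.sum_const, Finset.card_univ,
        Fintype.card_fin, nsmul_eq_mul]
      have h3 : ∀ v ∈ G.neighborFinset w, (1/(q:ℝ)) * g s(w, v) = (1/(q:ℝ)) * (φ w + φ v) := by
        intro v _
        rw [hg, Sym2.lift_mk]
      rw [Finset.sum_congr rfl h3]
      have h4 := congrFun hφ w
      rw [SimpleGraph.lapMatrix_mulVec_apply] at h4
      have h5 : ψ (Sum.inl w) = (2/(q:ℝ)) * φ w := rfl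
      rw [h5]
      simp only [Finset.mul_sum, Sum.inl.injEq]
      have h6 : ∀ i ∈ G.neighborFinset w, (q:ℝ) * ((1/(q:ℝ)) * (φ w + φ i)) = φ w + φ i := by
        intro i _; field_simp
      rw [Finset.sum_congr rfl h6, Finset.sum_add_distrib, Finset.sum_const,
        SimpleGraph.card_neighborFinset_eq_degree, nsmul_eq_mul]
      have h7 : (q:ℝ) * (G.degree w:ℝ) * ((2/(q:ℝ)) * φ w)
          - ((G.degree w:ℝ) * φ w + ∑ i ∈ G.neighborFinset w, φ i)
          = (G.degree w : ℝ) * φ w - ∑ u ∈ G.neighborFinset w, φ u := by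
        field_simp
        ring
      rw [h7, h4]
    | inr p =>
      obtain ⟨e, k'⟩ := p
      rw [deg_inr, nbr_inr]
      have h1 : ∀ u : V, (if u ∈ (e : Sym2 V) then ψ (Sum.inl u) else 0)
          = if u ∈ (e : Sym2 V) then (2/(q:ℝ)) * φ u else 0 := fun u => rfl
      simp only [h1]
      rw [sum_ite_mem_edge G e (fun u => (2/(q:ℝ)) * φ u)]
      have h2 : ψ (Sum.inr (e, k')) = (1/(q:ℝ)) * g e := rfl
      rw [h2]
      have h3 : (Sym2.lift ⟨fun x z => (2/(q:ℝ)) * φ x + (2/(q:ℝ)) * φ z,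
          by intros; ring⟩ (e : Sym2 V)) = (2/(q:ℝ)) * g e := by
        rw [hg]
        obtain ⟨ee, he⟩ := e
        induction ee using Sym2.ind with
        | _ x z =>
          have hco : (↑(⟨s(x, z), he⟩ : G.edgeSet) : Sym2 V) = s(x, z) := rfl
          simp only [hco, Sym2.lift_mk]
          ring
      rw [h3]
      have hne1 : (Sum.inr (e, k') : V ⊕ (G.edgeSet × Fin q)) ≠ Sum.inl a := Sum.inr_ne_inl
      have hne2 : (Sum.inr (e, k') : V ⊕ (G.edgeSet × Fin q)) ≠ Sum.inl b := Sum.inr_ne_inl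
      rw [if_neg hne1, if_neg hne2]
      field_simp
      ring
  have := effRes_unique (qSubdivision G q) (qSub_connected G q hc hq) hr'
    (Sum.inl a) (Sum.inl b) ψ key
  rw [this, hra]
  show (2/(q:ℝ)) * φ a - (2/(q:ℝ)) * φ b = _
  ring

lemma green_row_inr {Hh : Matrix (V ⊕ (G.edgeSet × Fin q)) (V ⊕ (G.edgeSet × Fin q)) ℝ}
    (hH : (qSubdivision G q).lapMatrix ℝ * Hh =
      1 - (Fintype.card (V ⊕ (G.edgeSet × Fin q)) : ℝ)⁻¹ • Matrix.of (fun _ _ => (1 : ℝ)))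
    (e : G.edgeSet) (k : Fin q) (x y : V) (hxy : (e : Sym2 V) = s(x, y))
    (c : V ⊕ (G.edgeSet × Fin q)) :
    2 * Hh (Sum.inr (e, k)) c - Hh (Sum.inl x) c - Hh (Sum.inl y) c
      = (if Sum.inr (e, k) = c then (1:ℝ) else 0)
        - (Fintype.card (V ⊕ (G.edgeSet × Fin q)) : ℝ)⁻¹ := by
  have hxy' : x ≠ y := by
    have := e.2
    rw [hxy] at this
    exact G.ne_of_adj (G.mem_edgeSet.mp this)
  have hcol : ((qSubdivision G q).lapMatrix ℝ *ᵥ (fun u => Hh u c)) (Sum.inr (e, k))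
      = ((qSubdivision G q).lapMatrix ℝ * Hh) (Sum.inr (e, k)) c := by
    simp [Matrix.mulVec, Matrix.mul_apply, dotProduct]
  rw [SimpleGraph.lapMatrix_mulVec_apply, deg_inr, nbr_inr] at hcol
  have h1 : ∀ w : V, (if w ∈ (e : Sym2 V) then Hh (Sum.inl w) c else 0)
      = if w ∈ (s(x,y) : Sym2 V) then Hh (Sum.inl w) c else 0 := by
    intro w; rw [hxy]
  rw [Finset.sum_congr rfl (fun w _ => h1 w), sum_ite_pair hxy'
    (fun w => Hh (Sum.inl w) c)] at hcol
  rw [hH] at hcol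
  simp only [Matrix.sub_apply, Matrix.one_apply, Matrix.smul_apply, Matrix.of_apply,
    smul_eq_mul, mul_one] at hcol
  linarith [hcol]

lemma r'_inr_inl (hc : G.Connected) (hq : 0 < q)
    {r' : (V ⊕ (G.edgeSet × Fin q)) → (V ⊕ (G.edgeSet × Fin q)) → ℝ}
    (hr' : IsEffRes (qSubdivision G q) r')
    (e : G.edgeSet) (k : Fin q) (x y : V) (hxy : (e : Sym2 V) = s(x, y)) (j : V) :
    r' (Sum.inr (e, k)) (Sum.inl j)
      = 1/2 - r' (Sum.inl x) (Sum.inl y) / 4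
        + (r' (Sum.inl x) (Sum.inl j) + r' (Sum.inl y) (Sum.inl j)) / 2 := by
  have hconn := qSub_connected G q hc hq
  obtain ⟨Hh, hsymm, hH⟩ := green_exists (qSubdivision G q) hconn
  have hsym : ∀ a b, Hh a b = Hh b a := fun a b =>
    (congrFun (congrFun hsymm a) b).symm
  have hf := effRes_green (qSubdivision G q) hconn hr' hH
  have E1 := green_row_inr G q hH e k x y hxy (Sum.inr (e, k))
  have E2 := green_row_inr G q hH e k x y hxy (Sum.inl j)
  have E3 := green_row_inr G q hH e k x y hxy (Sum.inl x)
  have E4 := green_row_inr G q hH e k x y hxy (Sum.inl y)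
  rw [if_pos rfl] at E1
  rw [if_neg (Sum.inr_ne_inl)] at E2 E3 E4
  rw [hf (Sum.inr (e,k)) (Sum.inl j), hf (Sum.inl x) (Sum.inl y),
    hf (Sum.inl x) (Sum.inl j), hf (Sum.inl y) (Sum.inl j)]
  have s1 := hsym (Sum.inr (e,k)) (Sum.inl j)
  have s2 := hsym (Sum.inr (e,k)) (Sum.inl x)
  have s3 := hsym (Sum.inr (e,k)) (Sum.inl y)
  have s4 := hsym (Sum.inl x) (Sum.inl j)
  have s5 := hsym (Sum.inl y) (Sum.inl j)
  have s6 := hsym (Sum.inl x) (Sum.inl y)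
  linarith [E1, E2, E3, E4, s1, s2, s3, s4, s5, s6]

lemma foster (hc : G.Connected) {r : V → V → ℝ} (hr : IsEffRes G r) :
    ∑ i : V, ∑ j : V, (if G.Adj i j then r i j else 0)
      = 2 * ((Fintype.card V : ℝ) - 1) := by
  haveI : Nonempty V := hc.nonempty
  have hn0 : (0 : ℝ) < (Fintype.card V : ℝ) := by exact_mod_cast Fintype.card_pos
  obtain ⟨H, hsymm, hH⟩ := green_exists G hc
  have hsym : ∀ a b, H a b = H b a := fun a b => (congrFun (congrFun hsymm a) b).symm
  have hf := effRes_green G hc hr hH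
  -- trace identity
  have htr : ∑ i : V, (G.lapMatrix ℝ * H) i i = (Fintype.card V : ℝ) - 1 := by
    rw [hH]
    simp only [Matrix.sub_apply, Matrix.one_apply_eq, Matrix.smul_apply, Matrix.of_apply,
      smul_eq_mul, mul_one, Finset.sum_sub_distrib, Finset.sum_const, Finset.card_univ,
      nsmul_eq_mul]
    rw [mul_inv_cancel₀ (ne_of_gt hn0)]
  have hexp : ∀ i : V, (G.lapMatrix ℝ * H) i i
      = (G.degree i : ℝ) * H i i - ∑ k : V, (if G.Adj i k then H i k else 0) := by
    intro i
    rw [Matrix.mul_apply]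
    have : ∀ k : V, G.lapMatrix ℝ i k * H k i
        = (if i = k then (G.degree i : ℝ) * H k i else 0)
          - (if G.Adj i k then H i k else 0) := by
      intro k
      simp only [SimpleGraph.lapMatrix, Matrix.sub_apply, SimpleGraph.degMatrix,
        Matrix.diagonal_apply, SimpleGraph.adjMatrix_apply, sub_mul]
      congr 1
      · split_ifs with h
        · rw [h]
        · ring
      · split_ifs with h
        · rw [hsym k i, one_mul]
        · ring
    rw [Finset.sum_congr rfl (fun k _ => this k), Finset.sum_sub_distrib,
      Finset.sum_ite_eq Finset.univ i (fun k => (G.degree i : ℝ) * H k i)]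
    simp
  have htrace2 : ∑ i : V, ((G.degree i : ℝ) * H i i)
      - ∑ i : V, ∑ k : V, (if G.Adj i k then H i k else 0)
      = (Fintype.card V : ℝ) - 1 := by
    rw [← Finset.sum_sub_distrib, ← htr]
    exact Finset.sum_congr rfl fun i _ => (hexp i).symm
  -- expand r
  have hsplit : ∀ i j : V, (if G.Adj i j then r i j else 0)
      = (if G.Adj i j then H i i else 0) + (if G.Adj i j then H j j else 0)
        - (if G.Adj i j then H i j else 0) - (if G.Adj i j then H j i else 0) := by
    intro i j
    split_ifs with h
    · rw [hf i j]
    · ring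
  simp only [hsplit, Finset.sum_sub_distrib, Finset.sum_add_distrib]
  have hA : ∀ i : V, ∑ j : V, (if G.Adj i j then H i i else 0)
      = (G.degree i : ℝ) * H i i := by
    intro i
    rw [SimpleGraph.degree_eq_sum_if_adj, Finset.sum_mul]
    exact Finset.sum_congr rfl fun j _ => by split_ifs <;> simp
  have hB : ∑ i : V, ∑ j : V, (if G.Adj i j then H j j else 0)
      = ∑ i : V, ((G.degree i : ℝ) * H i i) := by
    rw [Finset.sum_comm]
    refine Finset.sum_congr rfl fun j _ => ?_
    rw [← hA j]
    exact Finset.sum_congr rfl fun i _ => by rw [if_congr (G.adj_comm j i) rfl rfl]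
  have hD : ∑ i : V, ∑ j : V, (if G.Adj i j then H j i else 0)
      = ∑ i : V, ∑ j : V, (if G.Adj i j then H i j else 0) := by
    rw [Finset.sum_comm]
    refine Finset.sum_congr rfl fun j _ => Finset.sum_congr rfl fun i _ => ?_
    rw [if_congr (G.adj_comm j i) rfl rfl]
  rw [Finset.sum_congr rfl (fun i _ => hA i), hB, hD]
  linarith [htrace2]

lemma sum_edges_eq (f : V → V → ℝ) (hf : ∀ a b, f a b = f b a) :
    2 * (∑ e ∈ G.edgeFinset, Sym2.lift ⟨f, hf⟩ e)
      = ∑ i : V, ∑ j : V, (if G.Adj i j then f i j else 0) := by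
  have hrhs : ∑ i : V, ∑ j : V, (if G.Adj i j then f i j else 0)
      = ∑ p ∈ Finset.univ.filter (fun p : V × V => G.Adj p.1 p.2), f p.1 p.2 := by
    rw [Finset.sum_filter]
    exact (Fintype.sum_prod_type (f := fun p : V × V => if G.Adj p.1 p.2 then f p.1 p.2 else 0)).symm
  rw [hrhs]
  rw [← Finset.sum_fiberwise_of_maps_to (g := fun p : V × V => Sym2.mk p.1 p.2)
    (t := G.edgeFinset) (fun p hp => by
      rw [SimpleGraph.mem_edgeFinset]
      exact (Finset.mem_filter.mp hp).2)]
  rw [Finset.mul_sum]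
  refine Finset.sum_congr rfl fun e he => ?_
  rw [SimpleGraph.mem_edgeFinset] at he
  induction e using Sym2.ind with
  | _ a b =>
    have hadj : G.Adj a b := G.mem_edgeSet.mp he
    have hab : a ≠ b := G.ne_of_adj hadj
    have hfib : (Finset.univ.filter (fun p : V × V => G.Adj p.1 p.2)).filter
        (fun p => Sym2.mk p.1 p.2 = s(a, b)) = {(a, b), (b, a)} := by
      ext p
      obtain ⟨p1, p2⟩ := p
      simp only [Finset.mem_filter, Finset.mem_univ, true_and, Finset.mem_insert,
        Finset.mem_singleton, Prod.mk.injEq]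
      constructor
      · rintro ⟨hadj', heq⟩
        have := Sym2.eq_iff.mp heq
        tauto
      · rintro (⟨h1, h2⟩ | ⟨h1, h2⟩) <;> subst h1 <;> subst h2
        · exact ⟨hadj, rfl⟩
        · exact ⟨hadj.symm, Sym2.eq_swap⟩
    rw [hfib, Finset.sum_pair (by simp [Prod.ext_iff, hab, hab.symm] : ((a,b) : V × V) ≠ (b,a))]
    rw [Sym2.lift_mk]
    simp only []
    rw [hf b a]
    ring

end Sub


end Stmt14Aux

/-- sum of resistances between new and old nodes of `S_q(G)`. -/
theorem stmt14 [Fintype V] [DecidableEq V] (G : SimpleGraph V) [DecidableRel G.Adj]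
    (hconn : G.Connected) (q : ℕ) (hq : 0 < q)
    (r : V → V → ℝ) (r' : (V ⊕ (G.edgeSet × Fin q)) → (V ⊕ (G.edgeSet × Fin q)) → ℝ)
    (hr : IsEffRes G r) (hr' : IsEffRes (qSubdivision G q) r') :
    ∑ p : G.edgeSet × Fin q, ∑ j : V, r' (Sum.inr p) (Sum.inl j) =
      addKirchhoff G r +
        ((G.edgeFinset.card : ℝ) * (Fintype.card V : ℝ) * q -
          (Fintype.card V : ℝ) ^ 2 + (Fintype.card V : ℝ)) / 2 := by
  have hq0 : (q : ℝ) ≠ 0 := Nat.cast_ne_zero.mpr hq.ne'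
  set n : ℝ := (Fintype.card V : ℝ) with hn
  set m : ℝ := (G.edgeFinset.card : ℝ) with hm
  -- symmetry of r
  have hrsym : ∀ a b : V, r a b = r b a := by
    obtain ⟨H, hsymm, hH⟩ := Stmt14Aux.green_exists G hconn
    have hsym : ∀ a b, H a b = H b a := fun a b => (congrFun (congrFun hsymm a) b).symm
    have hf := Stmt14Aux.effRes_green G hconn hr hH
    intro a b
    rw [hf a b, hf b a, hsym a b]
    ring
  set R : V → ℝ := fun w => ∑ j, r w j with hR
  have hKsym : ∀ a b : V, (n/2 - n * r a b/(2*(q:ℝ)) + (R a + R b)/(q:ℝ))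
      = (n/2 - n * r b a/(2*(q:ℝ)) + (R b + R a)/(q:ℝ)) := by
    intro a b
    rw [hrsym a b]
    ring
  set K : Sym2 V → ℝ := Sym2.lift ⟨fun a b => n/2 - n * r a b/(2*(q:ℝ)) + (R a + R b)/(q:ℝ),
    hKsym⟩ with hK
  -- inner sum over j for a fixed new vertex
  have hinner : ∀ (e : G.edgeSet) (k : Fin q),
      ∑ j : V, r' (Sum.inr (e, k)) (Sum.inl j) = K (e : Sym2 V) := by
    intro e k
    obtain ⟨ee, he⟩ := e
    induction ee using Sym2.ind with
    | _ x y =>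
      have hco : (↑(⟨s(x, y), he⟩ : G.edgeSet) : Sym2 V) = s(x, y) := rfl
      have hper : ∀ j : V, r' (Sum.inr (⟨s(x,y), he⟩, k)) (Sum.inl j)
          = 1/2 - r x y/(2*(q:ℝ)) + (r x j + r y j)/(q:ℝ) := by
        intro j
        rw [Stmt14Aux.r'_inr_inl G q hconn hq hr' ⟨s(x,y), he⟩ k x y hco j,
          Stmt14Aux.r'_inl_inl G q hconn hq hr hr' x y, Stmt14Aux.r'_inl_inl G q hconn hq hr hr' x j,
          Stmt14Aux.r'_inl_inl G q hconn hq hr hr' y j]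
        field_simp
        ring
      rw [Finset.sum_congr rfl (fun j _ => hper j), hco, hK, Sym2.lift_mk]
      simp only [Finset.sum_add_distrib, Finset.sum_sub_distrib, Finset.sum_const,
        Finset.card_univ, nsmul_eq_mul, hR]
      rw [← Finset.sum_div, ← Finset.sum_add_distrib]
      field_simp
      rw [← hn]; ring
  -- collapse the p-sum
  rw [Fintype.sum_prod_type]
  have hcol : ∀ e : G.edgeSet, ∑ k : Fin q, ∑ j : V, r' (Sum.inr (e, k)) (Sum.inl j)
      = (q : ℝ) * K (e : Sym2 V) := by
    intro e
    rw [Finset.sum_congr rfl (fun k _ => hinner e k), Finset.sum_const, Finset.card_univ,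
      Fintype.card_fin, nsmul_eq_mul]
  rw [Finset.sum_congr rfl (fun e _ => hcol e), ← Finset.mul_sum]
  have hcoe : (∑ e : G.edgeSet, K (e : Sym2 V)) = ∑ e ∈ G.edgeFinset, K e := by
    exact Finset.sum_set_coe (f := K) (s := G.edgeSet)
  rw [hcoe]
  -- double counting
  have hdc := Stmt14Aux.sum_edges_eq G _ hKsym
  -- evaluate the double sum termwise
  have hdeg : ∑ i : V, (G.degree i : ℝ) = 2 * m := by
    have hfe : G.edgeFinset = @SimpleGraph.edgeFinset V G G.fintypeEdgeSet := by
      congr 1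
      exact Subsingleton.elim _ _
    rw [hm, hfe]
    exact_mod_cast G.sum_degrees_eq_twice_card_edges
  have h1 : ∑ i : V, ∑ j : V, (if G.Adj i j then (1:ℝ) else 0) = 2 * m := by
    rw [← hdeg]
    exact Finset.sum_congr rfl fun i _ => (G.degree_eq_sum_if_adj i).symm
  have hfoster := Stmt14Aux.foster G hconn hr
  have hS : ∀ i : V, ∑ j : V, (if G.Adj i j then R i else 0) = (G.degree i : ℝ) * R i := by
    intro i
    rw [SimpleGraph.degree_eq_sum_if_adj, Finset.sum_mul]
    exact Finset.sum_congr rfl fun j _ => by split_ifs <;> ring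
  have hS2 : ∑ i : V, ∑ j : V, (if G.Adj i j then R j else 0)
      = ∑ i : V, (G.degree i : ℝ) * R i := by
    rw [Finset.sum_comm]
    refine Finset.sum_congr rfl fun j _ => ?_
    rw [← hS j]
    exact Finset.sum_congr rfl fun i _ => by rw [if_congr (G.adj_comm j i) rfl rfl]
  -- addKirchhoff = ∑ d_i R_i
  have haddK : addKirchhoff G r = ∑ i : V, (G.degree i : ℝ) * R i := by
    rw [addKirchhoff]
    have hsplit : ∀ i j : V, ((G.degree i : ℝ) + (G.degree j : ℝ)) * r i j
        = (G.degree i : ℝ) * r i j + (G.degree j : ℝ) * r i j := fun i j => by ring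
    simp only [hsplit, Finset.sum_add_distrib]
    have hA : ∑ i : V, ∑ j : V, (G.degree i : ℝ) * r i j
        = ∑ i : V, (G.degree i : ℝ) * R i := by
      exact Finset.sum_congr rfl fun i _ => by rw [hR, Finset.mul_sum]
    have hB : ∑ i : V, ∑ j : V, (G.degree j : ℝ) * r i j
        = ∑ i : V, (G.degree i : ℝ) * R i := by
      rw [Finset.sum_comm]
      refine Finset.sum_congr rfl fun j _ => ?_
      rw [hR, Finset.mul_sum]
      exact Finset.sum_congr rfl fun i _ => by rw [hrsym i j]
    rw [hA, hB]
    ring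
  -- expand K in the double sum
  have hKexp : ∑ i : V, ∑ j : V, (if G.Adj i j then
      (n/2 - n * r i j/(2*(q:ℝ)) + (R i + R j)/(q:ℝ)) else 0)
      = (n/2) * (2*m) - n/(2*(q:ℝ)) * (2*(n-1))
        + (2/(q:ℝ)) * ∑ i : V, (G.degree i : ℝ) * R i := by
    have hsplit : ∀ i j : V, (if G.Adj i j then
        (n/2 - n * r i j/(2*(q:ℝ)) + (R i + R j)/(q:ℝ)) else 0)
        = (n/2) * (if G.Adj i j then (1:ℝ) else 0)
          - n/(2*(q:ℝ)) * (if G.Adj i j then r i j else 0)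
          + (1/(q:ℝ)) * ((if G.Adj i j then R i else 0) + (if G.Adj i j then R j else 0)) := by
      intro i j
      split_ifs with h
      · field_simp
      · ring
    simp only [hsplit, Finset.sum_add_distrib, Finset.sum_sub_distrib, ← Finset.mul_sum]
    rw [h1, hfoster]
    rw [Finset.sum_congr rfl (fun i _ => hS i), hS2, ← hn]
    ring
  -- final arithmetic
  rw [haddK]
  have hmain : (q:ℝ) * ∑ e ∈ G.edgeFinset, K e
      = (q:ℝ)/2 * ((n/2) * (2*m) - n/(2*(q:ℝ)) * (2*(n-1))
          + (2/(q:ℝ)) * ∑ i : V, (G.degree i : ℝ) * R i) := by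
    rw [← hKexp, ← hdc]
    ring
  rw [hmain]
  field_simp
  ring
end

section
/- Let G be a simple connected graph with n nodes and m edges, S_q(G) its q-subdivision graph with new node set V′. Then ∑_{{i,j}⊆V′} r̂_{ij} = (q/2) K̃(G) + mq(mq-1)/2 - m(n-1)q/2, where K̃(G) = ∑_{{i,j}} d_i d_j r_{ij} is the multiplicative degree-Kirchhoff index of G. -/
open Finset

variable {V : Type*}

open Finset

section Aux
variable {V : Type*} [Fintype V] [DecidableEq V] (G : SimpleGraph V) [DecidableRel G.Adj]

private lemma ep_ex (ε : G.edgeSet) : ∃ p : V × V, G.Adj p.1 p.2 ∧ (ε : Sym2 V) = s(p.1, p.2) := by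
  obtain ⟨e, he⟩ := ε
  induction e with
  | _ x y => exact ⟨(x, y), he, rfl⟩

/-- first endpoint of an edge -/
noncomputable def efst (ε : G.edgeSet) : V := (Classical.choose (ep_ex G ε)).1

/-- second endpoint of an edge -/
noncomputable def esnd (ε : G.edgeSet) : V := (Classical.choose (ep_ex G ε)).2

lemma efst_adj (ε : G.edgeSet) : G.Adj (efst G ε) (esnd G ε) :=
  (Classical.choose_spec (ep_ex G ε)).1

lemma edge_spec (ε : G.edgeSet) : (ε : Sym2 V) = s(efst G ε, esnd G ε) :=
  (Classical.choose_spec (ep_ex G ε)).2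

lemma efst_ne (ε : G.edgeSet) : efst G ε ≠ esnd G ε := (efst_adj G ε).ne

lemma K_endpoints (ε : G.edgeSet) {x y : V} (h : (ε : Sym2 V) = s(x, y))
    (K : V → V → ℝ) (hK : ∀ a b, K a b = K b a) :
    K (efst G ε) (esnd G ε) = K x y := by
  have h2 : s(efst G ε, esnd G ε) = s(x, y) := by rw [← edge_spec, h]
  rcases Sym2.eq_iff.1 h2 with ⟨h3, h4⟩ | ⟨h3, h4⟩
  · rw [h3, h4]
  · rw [h3, h4, hK]

lemma sum_mem_edge (ε : G.edgeSet) (c : V → ℝ) :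
    ∑ u : V, (if u ∈ (ε : Sym2 V) then c u else 0) = c (efst G ε) + c (esnd G ε) := by
  have hne := efst_ne G ε
  simp only [edge_spec G ε, Sym2.mem_iff]
  have : ∀ u : V, (if u = efst G ε ∨ u = esnd G ε then c u else 0)
      = (if u = efst G ε then c u else 0) + (if u = esnd G ε then c u else 0) := by
    intro u
    by_cases h1 : u = efst G ε <;> by_cases h2 : u = esnd G ε <;> simp_all
  rw [Finset.sum_congr rfl fun u _ => this u, Finset.sum_add_distrib,
    Finset.sum_ite_eq' univ, Finset.sum_ite_eq' univ]
  simp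

lemma sum_incidence (u : V) (K : V → V → ℝ) (hK : ∀ a b, K a b = K b a) :
    ∑ ε : G.edgeSet, (if u ∈ (ε : Sym2 V) then K (efst G ε) (esnd G ε) else 0)
      = ∑ v : V, if G.Adj u v then K u v else 0 := by
  rw [← Finset.sum_filter, ← Finset.sum_filter]
  refine Finset.sum_bij' (fun ε hε => Sym2.Mem.other' (Finset.mem_filter.1 hε).2)
    (fun v hv => ⟨s(u, v), (Finset.mem_filter.1 hv).2⟩) ?_ ?_ ?_ ?_ ?_
  · intro ε hε
    have hmem : u ∈ (ε : Sym2 V) := (Finset.mem_filter.1 hε).2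
    have hs : s(u, Sym2.Mem.other' hmem) = (ε : Sym2 V) := Sym2.other_spec' hmem
    have : G.Adj u (Sym2.Mem.other' hmem) := by
      rw [← SimpleGraph.mem_edgeSet, hs]; exact ε.2
    simp [this]
  · intro v hv
    simp [Sym2.mem_iff]
  · intro ε hε
    have hmem : u ∈ (ε : Sym2 V) := (Finset.mem_filter.1 hε).2
    exact Subtype.ext (Sym2.other_spec' hmem)
  · intro v hv
    have hadj : G.Adj u v := (Finset.mem_filter.1 hv).2
    have hmem : u ∈ (((⟨s(u, v), hadj⟩ : G.edgeSet) : G.edgeSet) : Sym2 V) := by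
      simp [Sym2.mem_iff]
    have hs : s(u, Sym2.Mem.other' hmem) = s(u, v) := Sym2.other_spec' hmem
    rcases Sym2.eq_iff.1 hs with ⟨-, h4⟩ | ⟨h3, h4⟩
    · exact h4
    · exact absurd h3 hadj.ne
  · intro ε hε
    have hmem : u ∈ (ε : Sym2 V) := (Finset.mem_filter.1 hε).2
    exact K_endpoints G ε (Sym2.other_spec' hmem).symm K hK

end Aux
open Matrix
section Aux2
variable {V : Type*} [Fintype V] [DecidableEq V] (G : SimpleGraph V) [DecidableRel G.Adj]

lemma lap_apply (ψ : V → ℝ) (w : V) :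
    (G.lapMatrix ℝ *ᵥ ψ) w = ∑ x : V, if G.Adj w x then ψ w - ψ x else 0 := by
  rw [SimpleGraph.lapMatrix_mulVec_apply, SimpleGraph.degree_eq_sum_if_adj,
    SimpleGraph.neighborFinset_eq_filter, Finset.sum_filter, Finset.sum_mul]
  rw [← Finset.sum_sub_distrib]
  congr 1
  ext x
  split_ifs <;> ring

lemma pot_unique {W : Type*} [Fintype W] [DecidableEq W] (H : SimpleGraph W)
    [DecidableRel H.Adj] (hH : H.Connected) {φ ψ : W → ℝ}
    (h : H.lapMatrix ℝ *ᵥ φ = H.lapMatrix ℝ *ᵥ ψ) (i j : W) :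
    φ i - φ j = ψ i - ψ j := by
  have h0 : Matrix.toLin' (H.lapMatrix ℝ) (φ - ψ) = 0 := by
    rw [Matrix.toLin'_apply, Matrix.mulVec_sub, h, sub_self]
  have h1 := (H.lapMatrix_mulVec_eq_zero_iff_forall_reachable (x := φ - ψ)).1 (by rwa [Matrix.toLin'_apply] at h0) i j
    (hH.preconnected i j)
  simp only [Pi.sub_apply] at h1
  linarith

lemma count_incidence (u : V) :
    ∑ ε : G.edgeSet, (if u ∈ (ε : Sym2 V) then (1:ℝ) else 0) = (G.degree u : ℝ) := by
  rw [sum_incidence G u (fun _ _ => 1) (fun _ _ => rfl), SimpleGraph.degree_eq_sum_if_adj]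

lemma edge_sum_deg (F : V → ℝ) :
    ∑ ε : G.edgeSet, (F (efst G ε) + F (esnd G ε)) = ∑ u : V, (G.degree u : ℝ) * F u := by
  have h : ∀ ε : G.edgeSet, F (efst G ε) + F (esnd G ε)
      = ∑ u : V, (if u ∈ (ε : Sym2 V) then F u else 0) := fun ε => (sum_mem_edge G ε F).symm
  rw [Finset.sum_congr rfl fun ε _ => h ε, Finset.sum_comm]
  refine Finset.sum_congr rfl fun u _ => ?_
  have : ∀ ε : G.edgeSet, (if u ∈ (ε : Sym2 V) then F u else 0)
      = F u * (if u ∈ (ε : Sym2 V) then (1:ℝ) else 0) := by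
    intro ε; split_ifs <;> ring
  rw [Finset.sum_congr rfl fun ε _ => this ε, ← Finset.mul_sum, count_incidence]
  ring

lemma edge_sum_two (K : V → V → ℝ) (hK : ∀ a b, K a b = K b a) :
    2 * ∑ ε : G.edgeSet, K (efst G ε) (esnd G ε)
      = ∑ u : V, ∑ v : V, if G.Adj u v then K u v else 0 := by
  have h : ∀ ε : G.edgeSet, 2 * K (efst G ε) (esnd G ε)
      = ∑ u : V, (if u ∈ (ε : Sym2 V) then K (efst G ε) (esnd G ε) else 0) := by
    intro ε
    rw [sum_mem_edge G ε (fun _ => K (efst G ε) (esnd G ε))]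
    ring
  rw [Finset.mul_sum, Finset.sum_congr rfl fun ε _ => h ε, Finset.sum_comm]
  exact Finset.sum_congr rfl fun u _ => sum_incidence G u K hK

end Aux2
section Aux3
variable {V : Type*} [Fintype V] [DecidableEq V] (G : SimpleGraph V) [DecidableRel G.Adj]
variable (q : ℕ)

lemma qSub_adj_inl_inl (u v : V) : ¬ (qSubdivision G q).Adj (Sum.inl u) (Sum.inl v) :=
  fun h => h

lemma qSub_adj_inr_inr (p p' : G.edgeSet × Fin q) :
    ¬ (qSubdivision G q).Adj (Sum.inr p) (Sum.inr p') := fun h => h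

lemma qSub_adj_inl_inr (u : V) (p : G.edgeSet × Fin q) :
    (qSubdivision G q).Adj (Sum.inl u) (Sum.inr p) ↔ u ∈ (p.1 : Sym2 V) := Iff.rfl

lemma qSub_adj_inr_inl (u : V) (p : G.edgeSet × Fin q) :
    (qSubdivision G q).Adj (Sum.inr p) (Sum.inl u) ↔ u ∈ (p.1 : Sym2 V) := Iff.rfl

lemma qSub_connected (hconn : G.Connected) (hq : 0 < q) :
    (qSubdivision G q).Connected := by
  have hstep : ∀ u v : V, G.Adj u v →
      (qSubdivision G q).Reachable (Sum.inl u) (Sum.inl v) := by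
    intro u v h
    have h1 : (qSubdivision G q).Adj (Sum.inl u) (Sum.inr (⟨s(u,v), h⟩, ⟨0, hq⟩)) := by
      rw [qSub_adj_inl_inr]; exact Sym2.mem_mk_left u v
    have h2 : (qSubdivision G q).Adj (Sum.inr (⟨s(u,v), h⟩, ⟨0, hq⟩)) (Sum.inl v) := by
      rw [qSub_adj_inr_inl]; exact Sym2.mem_mk_right u v
    exact h1.reachable.trans h2.reachable
  have hinl : ∀ u v : V, (qSubdivision G q).Reachable (Sum.inl u) (Sum.inl v) := by
    intro u v
    obtain ⟨w⟩ := hconn.preconnected u v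
    induction w with
    | nil => exact SimpleGraph.Reachable.refl _
    | cons h _ ih => exact (hstep _ _ h).trans ih
  have hto : ∀ w : V ⊕ (G.edgeSet × Fin q), ∃ u : V,
      (qSubdivision G q).Reachable w (Sum.inl u) := by
    rintro (u | p)
    · exact ⟨u, SimpleGraph.Reachable.refl _⟩
    · refine ⟨efst G p.1, SimpleGraph.Adj.reachable ?_⟩
      rw [qSub_adj_inr_inl, edge_spec]
      exact Sym2.mem_mk_left _ _
  have : Nonempty (V ⊕ (G.edgeSet × Fin q)) := ⟨Sum.inl hconn.nonempty.some⟩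
  refine SimpleGraph.Connected.mk fun w w' => ?_
  obtain ⟨u, h1⟩ := hto w
  obtain ⟨u', h2⟩ := hto w'
  exact h1.trans ((hinl u u').trans h2.symm)

end Aux3
section Aux4
variable {V : Type*} [Fintype V] [DecidableEq V] (G : SimpleGraph V) [DecidableRel G.Adj]
variable (q : ℕ)

lemma mem_half (x y u : V) (hxy : x ≠ y) :
    (if u ∈ s(x,y) then (1:ℝ)/2 else 0)
      = ((if u = x then (1:ℝ) else 0) + (if u = y then (1:ℝ) else 0))/2 := by
  simp only [Sym2.mem_iff]
  by_cases h1 : u = x <;> by_cases h2 : u = y <;> simp_all <;> norm_num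

/-- The potential on the subdivision graph induced by `φ`. -/
noncomputable def subPot (p p' : G.edgeSet × Fin q) (φ : V → ℝ) :
    (V ⊕ (G.edgeSet × Fin q)) → ℝ :=
  Sum.elim (fun u => 2 / (q:ℝ) * φ u)
    (fun w => (φ (efst G w.1) + φ (esnd G w.1)) / (q:ℝ)
      + ((if w = p then (1:ℝ)/2 else 0) - (if w = p' then (1:ℝ)/2 else 0)))

lemma lap_subPot (hq : 0 < q) (p p' : G.edgeSet × Fin q) (φ : V → ℝ)
    (hφ : G.lapMatrix ℝ *ᵥ φ = fun k =>
      (((if k = efst G p.1 then (1:ℝ) else 0) + (if k = esnd G p.1 then 1 else 0))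
        - ((if k = efst G p'.1 then 1 else 0) + (if k = esnd G p'.1 then 1 else 0))) / 2) :
    (qSubdivision G q).lapMatrix ℝ *ᵥ subPot G q p p' φ
      = fun k => (if k = Sum.inr p then (1:ℝ) else 0) - (if k = Sum.inr p' then 1 else 0) := by
  have hq0 : (q:ℝ) ≠ 0 := Nat.cast_ne_zero.2 hq.ne'
  funext k
  rw [lap_apply]
  cases k with
  | inr w =>
    rw [Fintype.sum_sum_type]
    have h2 : ∀ w' : G.edgeSet × Fin q,
        (if (qSubdivision G q).Adj (Sum.inr w) (Sum.inr w')
          then subPot G q p p' φ (Sum.inr w) - subPot G q p p' φ (Sum.inr w') else 0) = 0 := by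
      intro w'; rw [if_neg (qSub_adj_inr_inr G q w w')]
    rw [Finset.sum_congr rfl fun w' _ => h2 w', Finset.sum_const_zero, add_zero]
    have h1 : ∀ u : V,
        (if (qSubdivision G q).Adj (Sum.inr w) (Sum.inl u)
          then subPot G q p p' φ (Sum.inr w) - subPot G q p p' φ (Sum.inl u) else 0)
        = (if u ∈ (w.1 : Sym2 V)
            then subPot G q p p' φ (Sum.inr w) - 2 / (q:ℝ) * φ u else 0) := by
      intro u; exact if_congr (qSub_adj_inr_inl G q u w) rfl rfl
    rw [Finset.sum_congr rfl fun u _ => h1 u,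
      sum_mem_edge G w.1 (fun u => subPot G q p p' φ (Sum.inr w) - 2 / (q:ℝ) * φ u)]
    simp only [subPot, Sum.elim_inr, Sum.elim_inl, Sum.inr.injEq]
    split_ifs <;> field_simp <;> ring
  | inl u =>
    rw [Fintype.sum_sum_type]
    have h0 : ∀ v : V,
        (if (qSubdivision G q).Adj (Sum.inl u) (Sum.inl v)
          then subPot G q p p' φ (Sum.inl u) - subPot G q p p' φ (Sum.inl v) else 0) = 0 := by
      intro v; rw [if_neg (qSub_adj_inl_inl G q u v)]
    rw [Finset.sum_congr rfl fun v _ => h0 v, Finset.sum_const_zero, zero_add]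
    have hsplit : ∀ w' : G.edgeSet × Fin q,
        (if (qSubdivision G q).Adj (Sum.inl u) (Sum.inr w')
          then subPot G q p p' φ (Sum.inl u) - subPot G q p p' φ (Sum.inr w') else 0)
        = (if u ∈ (w'.1 : Sym2 V)
            then 2 / (q:ℝ) * φ u - (φ (efst G w'.1) + φ (esnd G w'.1)) / (q:ℝ) else 0)
          - (if w' = p then (if u ∈ (p.1 : Sym2 V) then (1:ℝ)/2 else 0) else 0)
          + (if w' = p' then (if u ∈ (p'.1 : Sym2 V) then (1:ℝ)/2 else 0) else 0) := by
      intro w'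
      have heq : (if (qSubdivision G q).Adj (Sum.inl u) (Sum.inr w')
          then subPot G q p p' φ (Sum.inl u) - subPot G q p p' φ (Sum.inr w') else 0)
          = (if u ∈ (w'.1 : Sym2 V)
            then subPot G q p p' φ (Sum.inl u) - subPot G q p p' φ (Sum.inr w') else 0) :=
        if_congr (qSub_adj_inl_inr G q u w') rfl rfl
      rw [heq]
      simp only [subPot, Sum.elim_inl, Sum.elim_inr]
      split_ifs <;> simp_all <;> ring
    rw [Finset.sum_congr rfl fun w' _ => hsplit w']
    rw [Finset.sum_add_distrib, Finset.sum_sub_distrib,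
      Finset.sum_ite_eq' univ p, Finset.sum_ite_eq' univ p']
    simp only [Finset.mem_univ, if_pos]
    have hmain : ∑ w' : G.edgeSet × Fin q,
        (if u ∈ (w'.1 : Sym2 V)
          then 2 / (q:ℝ) * φ u - (φ (efst G w'.1) + φ (esnd G w'.1)) / (q:ℝ) else 0)
        = (G.lapMatrix ℝ *ᵥ φ) u := by
      rw [Fintype.sum_prod_type]
      have hconst : ∀ ε : G.edgeSet, ∑ _k : Fin q,
          (if u ∈ (ε : Sym2 V)
            then 2 / (q:ℝ) * φ u - (φ (efst G ε) + φ (esnd G ε)) / (q:ℝ) else 0)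
          = (if u ∈ (ε : Sym2 V)
              then 2 * φ u - (φ (efst G ε) + φ (esnd G ε)) else 0) := by
        intro ε
        rw [Finset.sum_const, Finset.card_univ, Fintype.card_fin, nsmul_eq_mul]
        split_ifs with h
        · field_simp
        · ring
      rw [Finset.sum_congr rfl fun ε _ => hconst ε,
        sum_incidence G u (fun x y => 2 * φ u - (φ x + φ y)) (by intro a b; ring),
        lap_apply]
      exact Finset.sum_congr rfl fun v _ => by split_ifs <;> ring
    rw [hmain, hφ]
    have e1 : (if u ∈ (p.1 : Sym2 V) then (1:ℝ)/2 else 0)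
        = ((if u = efst G p.1 then (1:ℝ) else 0) + (if u = esnd G p.1 then (1:ℝ) else 0))/2 := by
      rw [edge_spec G p.1, mem_half _ _ _ (efst_ne G p.1)]
    have e2 : (if u ∈ (p'.1 : Sym2 V) then (1:ℝ)/2 else 0)
        = ((if u = efst G p'.1 then (1:ℝ) else 0) + (if u = esnd G p'.1 then (1:ℝ) else 0))/2 := by
      rw [edge_spec G p'.1, mem_half _ _ _ (efst_ne G p'.1)]
    rw [e1, e2]
    have : (Sum.inl u : V ⊕ (G.edgeSet × Fin q)) ≠ Sum.inr p := by simp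
    have h2 : (Sum.inl u : V ⊕ (G.edgeSet × Fin q)) ≠ Sum.inr p' := by simp
    rw [if_neg this, if_neg h2]
    ring

end Aux4
section Aux5
variable {V : Type*} [Fintype V] [DecidableEq V] (G : SimpleGraph V) [DecidableRel G.Adj]
variable (q : ℕ)

lemma rprime_eq (hconn : G.Connected) (hq : 0 < q)
    (r' : (V ⊕ (G.edgeSet × Fin q)) → (V ⊕ (G.edgeSet × Fin q)) → ℝ)
    (hr' : IsEffRes (qSubdivision G q) r')
    (p p' : G.edgeSet × Fin q) (hpp' : p ≠ p') (φ : V → ℝ)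
    (hφ : G.lapMatrix ℝ *ᵥ φ = fun k =>
      (((if k = efst G p.1 then (1:ℝ) else 0) + (if k = esnd G p.1 then 1 else 0))
        - ((if k = efst G p'.1 then 1 else 0) + (if k = esnd G p'.1 then 1 else 0))) / 2) :
    r' (Sum.inr p) (Sum.inr p')
      = 1 + (φ (efst G p.1) + φ (esnd G p.1) - φ (efst G p'.1) - φ (esnd G p'.1)) / (q:ℝ) := by
  obtain ⟨χ, hχ1, hχ2⟩ := hr' (Sum.inr p) (Sum.inr p')
  have hu := pot_unique (qSubdivision G q) (qSub_connected G q hconn hq)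
    (φ := χ) (ψ := subPot G q p p' φ)
    (by rw [hχ1, lap_subPot G q hq p p' φ hφ]) (Sum.inr p) (Sum.inr p')
  rw [hχ2, hu]
  simp only [subPot, Sum.elim_inr, if_pos rfl, if_neg hpp', if_neg (Ne.symm hpp'), if_true]
  norm_num
  ring

lemma rprime_diag (r' : (V ⊕ (G.edgeSet × Fin q)) → (V ⊕ (G.edgeSet × Fin q)) → ℝ)
    (hr' : IsEffRes (qSubdivision G q) r') (p : G.edgeSet × Fin q) :
    r' (Sum.inr p) (Sum.inr p) = 0 := by
  obtain ⟨χ, -, hχ2⟩ := hr' (Sum.inr p) (Sum.inr p)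
  rw [hχ2, sub_self]

end Aux5
/-- sum of resistances between pairs of new nodes of `S_q(G)`.
(The sum over unordered pairs is half the sum over ordered pairs.) -/
theorem stmt15 [Fintype V] [DecidableEq V] (G : SimpleGraph V) [DecidableRel G.Adj]
    (hconn : G.Connected) (q : ℕ) (hq : 0 < q)
    (r : V → V → ℝ) (r' : (V ⊕ (G.edgeSet × Fin q)) → (V ⊕ (G.edgeSet × Fin q)) → ℝ)
    (hr : IsEffRes G r) (hr' : IsEffRes (qSubdivision G q) r') :
    (∑ p : G.edgeSet × Fin q, ∑ p' : G.edgeSet × Fin q, r' (Sum.inr p) (Sum.inr p')) / 2 =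
      (q : ℝ) / 2 * mulKirchhoff G r +
        (G.edgeFinset.card : ℝ) * q * ((G.edgeFinset.card : ℝ) * q - 1) / 2 -
        (G.edgeFinset.card : ℝ) * ((Fintype.card V : ℝ) - 1) * q / 2 := by
  classical
  have hq0 : (q:ℝ) ≠ 0 := Nat.cast_ne_zero.2 hq.ne'
  obtain ⟨o⟩ := hconn.nonempty
  set g : V → V → ℝ := fun i => Classical.choose (hr i o) with hg_def
  have hg : ∀ i, G.lapMatrix ℝ *ᵥ g i
      = (fun k => (if k = i then (1:ℝ) else 0) - (if k = o then 1 else 0)) :=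
    fun i => (Classical.choose_spec (hr i o)).1
  set B : V → V → ℝ := fun u v => g v u with hB_def
  set T : G.edgeSet → G.edgeSet → ℝ := fun e f =>
    B (efst G e) (efst G f) + B (efst G e) (esnd G f)
      + B (esnd G e) (efst G f) + B (esnd G e) (esnd G f) with hT_def
  set dd : V → ℝ := fun u => (G.degree u : ℝ) with hdd_def
  set SB : ℝ := ∑ u : V, dd u * B u u with hSB_def
  set PT : ℝ := ∑ ε : G.edgeSet, ∑ f : G.edgeSet, T ε f with hPT_def
  set ST : ℝ := ∑ ε : G.edgeSet, T ε ε with hST_def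
  set M : ℝ := (Fintype.card G.edgeSet : ℝ) with hM_def
  set nV : ℝ := (Fintype.card V : ℝ) with hnV_def
  -- r in terms of B
  have r_eq : ∀ u v : V, r u v = B u u - B u v - B v u + B v v := by
    intro u v
    obtain ⟨φ, h1, h2⟩ := hr u v
    have hLgs : G.lapMatrix ℝ *ᵥ (g u - g v)
        = (fun k => (if k = u then (1:ℝ) else 0) - (if k = v then 1 else 0)) := by
      rw [Matrix.mulVec_sub, hg, hg]
      funext k; simp only [Pi.sub_apply]; ring
    have hu := pot_unique G hconn (φ := φ) (ψ := g u - g v) (by rw [h1, hLgs]) u v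
    rw [h2, hu]
    simp only [Pi.sub_apply, hB_def]
    ring
  -- key formula for resistances between distinct new nodes
  have key : ∀ p p' : G.edgeSet × Fin q, p ≠ p' →
      r' (Sum.inr p) (Sum.inr p')
        = 1 + (T p.1 p.1 + T p'.1 p'.1 - T p.1 p'.1 - T p'.1 p.1) / (2*(q:ℝ)) := by
    intro p p' hpp'
    have hφL : G.lapMatrix ℝ *ᵥ
        (fun u => (g (efst G p.1) u + g (esnd G p.1) u
          - g (efst G p'.1) u - g (esnd G p'.1) u)/2)
        = fun k => (((if k = efst G p.1 then (1:ℝ) else 0) + (if k = esnd G p.1 then 1 else 0))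
            - ((if k = efst G p'.1 then 1 else 0) + (if k = esnd G p'.1 then 1 else 0))) / 2 := by
      have hrw : (fun u => (g (efst G p.1) u + g (esnd G p.1) u
          - g (efst G p'.1) u - g (esnd G p'.1) u)/2)
          = (2:ℝ)⁻¹ • (g (efst G p.1) + g (esnd G p.1)
              - g (efst G p'.1) - g (esnd G p'.1)) := by
        funext u
        simp only [Pi.smul_apply, Pi.sub_apply, Pi.add_apply, smul_eq_mul]
        ring
      rw [hrw, Matrix.mulVec_smul, Matrix.mulVec_sub, Matrix.mulVec_sub, Matrix.mulVec_add,
        hg, hg, hg, hg]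
      funext k
      simp only [Pi.smul_apply, Pi.sub_apply, Pi.add_apply, smul_eq_mul]
      ring
    have hre := rprime_eq G q hconn hq r' hr' p p' hpp' _ hφL
    rw [hre]
    simp only [hT_def, hB_def]
    ring
  have h1 : ∀ p p' : G.edgeSet × Fin q, r' (Sum.inr p) (Sum.inr p')
      = (1 + (T p.1 p.1 + T p'.1 p'.1 - T p.1 p'.1 - T p'.1 p.1) / (2*(q:ℝ)))
        - (if p' = p then 1 else 0) := by
    intro p p'
    by_cases h : p' = p
    · subst h
      rw [rprime_diag G q r' hr' p', if_pos rfl]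
      ring
    · rw [key p p' (Ne.symm h), if_neg h]
      ring
  -- generic product-sum collapse
  have hProd : ∀ h : G.edgeSet → ℝ,
      ∑ p : G.edgeSet × Fin q, h p.1 = (q:ℝ) * ∑ ε : G.edgeSet, h ε := by
    intro h
    rw [Fintype.sum_prod_type]
    have hc : ∀ ε : G.edgeSet, ∑ _k : Fin q, h ε = (q:ℝ) * h ε := by
      intro ε
      rw [Finset.sum_const, Finset.card_univ, Fintype.card_fin, nsmul_eq_mul]
    rw [Finset.sum_congr rfl fun ε _ => hc ε, ← Finset.mul_sum]
  set F : G.edgeSet → G.edgeSet → ℝ := fun ε ε' =>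
    1 + (T ε ε + T ε' ε' - T ε ε' - T ε' ε) / (2*(q:ℝ)) with hF_def
  -- step 1 : remove the diagonal correction
  have step1 : ∑ p : G.edgeSet × Fin q, ∑ p' : G.edgeSet × Fin q, r' (Sum.inr p) (Sum.inr p')
      = (∑ p : G.edgeSet × Fin q, ∑ p' : G.edgeSet × Fin q, F p.1 p'.1) - M * q := by
    rw [Finset.sum_congr rfl fun p _ => Finset.sum_congr rfl fun p' _ => h1 p p',
      Finset.sum_congr rfl fun p _ => Finset.sum_sub_distrib _ _, Finset.sum_sub_distrib]
    have hind : ∀ p : G.edgeSet × Fin q,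
        ∑ p' : G.edgeSet × Fin q, (if p' = p then (1:ℝ) else 0) = 1 := by
      intro p
      rw [Finset.sum_ite_eq' Finset.univ p (fun _ => (1:ℝ))]
      simp
    rw [Finset.sum_congr rfl fun p _ => hind p, Finset.sum_const, Finset.card_univ,
      nsmul_eq_mul, mul_one, Fintype.card_prod, Fintype.card_fin]
    rw [hM_def]
    push_cast
    ring
  -- step 2 : collapse the Fin q components
  have step2 : ∑ p : G.edgeSet × Fin q, ∑ p' : G.edgeSet × Fin q, F p.1 p'.1
      = (q:ℝ) * ((q:ℝ) * ∑ ε : G.edgeSet, ∑ ε' : G.edgeSet, F ε ε') := by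
    calc ∑ p : G.edgeSet × Fin q, ∑ p' : G.edgeSet × Fin q, F p.1 p'.1
        = ∑ p : G.edgeSet × Fin q, ((q:ℝ) * ∑ ε' : G.edgeSet, F p.1 ε') :=
          Finset.sum_congr rfl fun p _ => hProd (F p.1)
      _ = (q:ℝ) * ∑ ε : G.edgeSet, ((q:ℝ) * ∑ ε' : G.edgeSet, F ε ε') :=
          hProd (fun ε => (q:ℝ) * ∑ ε' : G.edgeSet, F ε ε')
      _ = (q:ℝ) * ((q:ℝ) * ∑ ε : G.edgeSet, ∑ ε' : G.edgeSet, F ε ε') := by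
          rw [← Finset.mul_sum]
  -- step 3 : evaluate the edge-pair sum of F
  have inner3 : ∀ ε : G.edgeSet, ∑ ε' : G.edgeSet, F ε ε'
      = M + (M * T ε ε + ST - (∑ ε' : G.edgeSet, T ε ε')
          - (∑ ε' : G.edgeSet, T ε' ε)) / (2*(q:ℝ)) := by
    intro ε
    have hsplit : ∀ ε' : G.edgeSet, F ε ε'
        = 1 + T ε ε/(2*(q:ℝ)) + T ε' ε'/(2*(q:ℝ)) - T ε ε'/(2*(q:ℝ)) - T ε' ε/(2*(q:ℝ)) := by
      intro ε'; rw [hF_def]; ring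
    rw [Finset.sum_congr rfl fun ε' _ => hsplit ε', Finset.sum_sub_distrib,
      Finset.sum_sub_distrib, Finset.sum_add_distrib, Finset.sum_add_distrib,
      Finset.sum_const, Finset.card_univ, nsmul_eq_mul, mul_one, Finset.sum_const,
      Finset.card_univ, nsmul_eq_mul, ← Finset.sum_div, ← Finset.sum_div, ← Finset.sum_div]
    rw [← hM_def, ← hST_def]
    field_simp
    ring
  have step3 : ∑ ε : G.edgeSet, ∑ ε' : G.edgeSet, F ε ε'
      = M * M + (2 * M * ST - 2 * PT) / (2*(q:ℝ)) := by
    rw [Finset.sum_congr rfl fun ε _ => inner3 ε, Finset.sum_add_distrib,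
      Finset.sum_const, Finset.card_univ, nsmul_eq_mul, ← hM_def, ← Finset.sum_div,
      Finset.sum_sub_distrib, Finset.sum_sub_distrib, Finset.sum_add_distrib,
      ← Finset.mul_sum, ← hST_def, Finset.sum_const, Finset.card_univ, nsmul_eq_mul, ← hM_def]
    have e2 : (∑ ε : G.edgeSet, ∑ ε' : G.edgeSet, T ε' ε)
        = ∑ ε : G.edgeSet, ∑ ε' : G.edgeSet, T ε ε' := Finset.sum_comm
    rw [e2, ← hPT_def]
    field_simp
    ring
  -- Foster-type identity
  have foster : ∑ u : V, ∑ v : V, (if G.Adj u v then B u v else 0) = SB - (nV - 1) := by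
    have hv : ∀ v : V, ∑ u : V, (if G.Adj v u then B u v else 0)
        = dd v * B v v - (1 - (if v = o then (1:ℝ) else 0)) := by
      intro v
      have h := congrFun (hg v) v
      rw [SimpleGraph.lapMatrix_mulVec_apply] at h
      rw [if_pos (rfl : v = v)] at h
      have hN : ∑ u ∈ G.neighborFinset v, g v u
          = ∑ u : V, (if G.Adj v u then B u v else 0) := by
        rw [SimpleGraph.neighborFinset_eq_filter, Finset.sum_filter]
      rw [hN] at h
      simp only [hdd_def, hB_def]
      simp only [hB_def] at h
      linarith
    calc ∑ u : V, ∑ v : V, (if G.Adj u v then B u v else 0)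
        = ∑ v : V, ∑ u : V, (if G.Adj u v then B u v else 0) := Finset.sum_comm
      _ = ∑ v : V, ∑ u : V, (if G.Adj v u then B u v else 0) := by
          refine Finset.sum_congr rfl fun v _ => Finset.sum_congr rfl fun u _ => ?_
          exact if_congr (G.adj_comm u v) rfl rfl
      _ = ∑ v : V, (dd v * B v v - (1 - (if v = o then (1:ℝ) else 0))) :=
          Finset.sum_congr rfl fun v _ => hv v
      _ = SB - (nV - 1) := by
          rw [Finset.sum_sub_distrib, ← hSB_def, Finset.sum_sub_distrib, Finset.sum_const,
            Finset.card_univ, nsmul_eq_mul, mul_one, Finset.sum_ite_eq' Finset.univ o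
              (fun _ => (1:ℝ))]
          simp [hnV_def]
  -- diagonal edge sum
  have hTdiag : ST = 2 * SB - (nV - 1) := by
    have hsplit : ∀ ε : G.edgeSet, T ε ε
        = (B (efst G ε) (efst G ε) + B (esnd G ε) (esnd G ε))
          + (B (efst G ε) (esnd G ε) + B (esnd G ε) (efst G ε)) := by
      intro ε; rw [hT_def]; ring
    have hoff : ∑ ε : G.edgeSet, (B (efst G ε) (esnd G ε) + B (esnd G ε) (efst G ε))
        = SB - (nV - 1) := by
      have h2 := edge_sum_two G (fun x y => B x y + B y x) (fun a b => by ring)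
      have h3 : ∑ u : V, ∑ v : V, (if G.Adj u v then B u v + B v u else 0)
          = 2 * (SB - (nV - 1)) := by
        have hsum : ∀ u v : V, (if G.Adj u v then B u v + B v u else 0)
            = (if G.Adj u v then B u v else 0) + (if G.Adj u v then B v u else 0) := by
          intro u v; split_ifs <;> ring
        rw [Finset.sum_congr rfl fun u _ => Finset.sum_congr rfl fun v _ => hsum u v,
          Finset.sum_congr rfl fun u _ => Finset.sum_add_distrib, Finset.sum_add_distrib,
          foster]
        have hswap : ∑ u : V, ∑ v : V, (if G.Adj u v then B v u else 0)
            = ∑ u : V, ∑ v : V, (if G.Adj u v then B u v else 0) := by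
          rw [Finset.sum_comm]
          refine Finset.sum_congr rfl fun u _ => Finset.sum_congr rfl fun v _ => ?_
          exact if_congr (G.adj_comm v u) rfl rfl
        rw [hswap, foster]
        ring
      rw [h3] at h2
      linarith
    rw [hST_def, Finset.sum_congr rfl fun ε _ => hsplit ε, Finset.sum_add_distrib,
      edge_sum_deg G (fun u => B u u), hoff]
    rw [← hSB_def]  -- make the degree sum SB
    ring
  -- off-diagonal edge sums
  have hToff : PT = ∑ u : V, ∑ v : V, dd u * dd v * B u v := by
    have hinner : ∀ ε : G.edgeSet, ∑ f : G.edgeSet, T ε f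
        = ∑ v : V, (G.degree v : ℝ) * (B (efst G ε) v + B (esnd G ε) v) := by
      intro ε
      have hsp : ∀ f : G.edgeSet, T ε f
          = (fun w => B (efst G ε) w + B (esnd G ε) w) (efst G f)
            + (fun w => B (efst G ε) w + B (esnd G ε) w) (esnd G f) := by
        intro f; rw [hT_def]; simp only []; ring
      rw [Finset.sum_congr rfl fun f _ => hsp f,
        edge_sum_deg G (fun w => B (efst G ε) w + B (esnd G ε) w)]
    rw [hPT_def, Finset.sum_congr rfl fun ε _ => hinner ε, Finset.sum_comm]
    have hmid : ∀ v : V, ∑ ε : G.edgeSet,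
        (G.degree v : ℝ) * (B (efst G ε) v + B (esnd G ε) v)
        = ∑ u : V, (G.degree v : ℝ) * ((G.degree u : ℝ) * B u v) := by
      intro v
      rw [← Finset.mul_sum, edge_sum_deg G (fun u => B u v), Finset.mul_sum]
    rw [Finset.sum_congr rfl fun v _ => hmid v, Finset.sum_comm]
    refine Finset.sum_congr rfl fun u _ => Finset.sum_congr rfl fun v _ => ?_
    simp only [hdd_def]
    ring
  -- degree sum
  have hdeg2m : ∑ u : V, dd u = 2 * M := by
    have h := edge_sum_two G (fun _ _ => (1:ℝ)) (fun _ _ => rfl)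
    simp only [hdd_def]
    rw [Finset.sum_congr rfl fun u _ => SimpleGraph.degree_eq_sum_if_adj G u, ← h,
      Finset.sum_const, Finset.card_univ, nsmul_eq_mul, mul_one, hM_def]
  have hMcard : (G.edgeFinset.card : ℝ) = M := by
    rw [hM_def, SimpleGraph.edgeFinset, Set.toFinset_card]
  -- multiplicative Kirchhoff index
  have hmulK : mulKirchhoff G r = 2 * M * SB - ∑ u : V, ∑ v : V, dd u * dd v * B u v := by
    unfold mulKirchhoff
    have hexp : ∀ u v : V, (G.degree u : ℝ) * (G.degree v : ℝ) * r u v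
        = dd u * dd v * B u u + dd u * dd v * B v v
          - dd u * dd v * B u v - dd u * dd v * B v u := by
      intro u v; rw [r_eq u v]; simp only [hdd_def]; ring
    rw [Finset.sum_congr rfl fun u _ => Finset.sum_congr rfl fun v _ => hexp u v]
    have inner : ∀ u : V, ∑ v : V, (dd u * dd v * B u u + dd u * dd v * B v v
        - dd u * dd v * B u v - dd u * dd v * B v u)
        = (∑ v : V, dd u * dd v * B u u) + (∑ v : V, dd u * dd v * B v v)
          - (∑ v : V, dd u * dd v * B u v) - (∑ v : V, dd u * dd v * B v u) := by
      intro u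
      rw [Finset.sum_sub_distrib, Finset.sum_sub_distrib, Finset.sum_add_distrib]
    rw [Finset.sum_congr rfl fun u _ => inner u, Finset.sum_sub_distrib,
      Finset.sum_sub_distrib, Finset.sum_add_distrib]
    have e1 : ∑ u : V, ∑ v : V, dd u * dd v * B u u = 2 * M * SB := by
      have h1 : ∀ u : V, ∑ v : V, dd u * dd v * B u u = dd u * B u u * ∑ v : V, dd v := by
        intro u
        rw [Finset.mul_sum]
        exact Finset.sum_congr rfl fun v _ => by ring
      rw [Finset.sum_congr rfl fun u _ => h1 u, hdeg2m, hSB_def, Finset.mul_sum]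
      exact Finset.sum_congr rfl fun u _ => by ring
    have e2 : ∑ u : V, ∑ v : V, dd u * dd v * B v v = 2 * M * SB := by
      rw [Finset.sum_comm]
      calc ∑ v : V, ∑ u : V, dd u * dd v * B v v
          = ∑ v : V, ∑ u : V, dd v * dd u * B v v :=
            Finset.sum_congr rfl fun v _ => Finset.sum_congr rfl fun u _ => by ring
        _ = 2 * M * SB := e1
    have e4 : ∑ u : V, ∑ v : V, dd u * dd v * B v u
        = ∑ u : V, ∑ v : V, dd u * dd v * B u v := by
      rw [Finset.sum_comm]
      exact Finset.sum_congr rfl fun u _ => Finset.sum_congr rfl fun v _ => by ring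
    rw [e1, e2, e4]
    ring
  -- final assembly
  rw [step1, step2, step3, hTdiag, hToff, hmulK, hMcard]
  field_simp
  ring
end
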